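/- Let u, v ∈ ℝ² be nonzero points with 2 ≤ ‖u‖ ≤ 2.52, 2 ≤ ‖v‖ ≤ 2.52, and ‖u - v‖ ≥ 2. Then the angle θ between u and v at the origin satisfies θ ≥ (arccos(‖u‖/4) - π/6) + (arccos(‖v‖/4) - π/6). -/

import Mathlib

open Real InnerProductGeometry RealInnerProductSpace

lemma le_of_sq_le_sq' {x y : ℝ} (hx : 0 ≤ x) (hy : 0 ≤ y) (h : x ^ 2 ≤ y ^ 2) : x ≤ y := by
  calc x = Real.sqrt (x ^ 2) := (Real.sqrt_sq hx).symm
    _ ≤ Real.sqrt (y ^ 2) := Real.sqrt_le_sqrt h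
    _ = y := Real.sqrt_sq hy

lemma my_arccos_le_arccos {x y : ℝ} (h : x ≤ y) : Real.arccos y ≤ Real.arccos x := by
  simp only [Real.arccos_eq_pi_div_two_sub_arcsin]
  linarith [Real.monotone_arcsin h]

lemma key_ineq (a b p q s : ℝ) (ha : 2 ≤ a) (ha' : a ≤ 2.52)
    (hb : 2 ≤ b) (hb' : b ≤ 2.52)
    (hp0 : 0 ≤ p) (hq0 : 0 ≤ q) (hs0 : 0 ≤ s)
    (hp : p ^ 2 = 16 - a ^ 2) (hq : q ^ 2 = 16 - b ^ 2) (hs : s ^ 2 = 3) :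
    16 * (a ^ 2 + b ^ 2 - 4) ≤ a ^ 2 * b ^ 2 - a * b * (p * q) + s * (a * b) * (b * p + a * q) := by
  have hs17 : 1.7 ≤ s := by nlinarith
  have hp3 : 3 ≤ p := by nlinarith
  have hq3 : 3 ≤ q := by nlinarith
  have h1 : 0 ≤ s * a - p := by
    have := le_of_sq_le_sq' hp0 (by nlinarith : (0:ℝ) ≤ s * a) (by nlinarith : p ^ 2 ≤ (s * a) ^ 2)
    linarith
  have h2 : 0 ≤ s * b - q := by
    have := le_of_sq_le_sq' hq0 (by nlinarith : (0:ℝ) ≤ s * b) (by nlinarith : q ^ 2 ≤ (s * b) ^ 2)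
    linarith
  have h3a : 2 * a ≤ s * a + p := by nlinarith
  have h3b : 2 * b ≤ s * b + q := by nlinarith
  have h3 : 0 ≤ (s * a + p) * (s * b + q) - 4 * (a * b) := by nlinarith
  have hid : a ^ 2 * b ^ 2 - a * b * (p * q) + s * (a * b) * (b * p + a * q)
      - 16 * (a ^ 2 + b ^ 2 - 4)
      = (s * a - p) * ((s * b - q) * ((s * a + p) * (s * b + q) - 4 * (a * b))) / 4 := by
    linear_combination ((a ^ 2 * q ^ 2 + b ^ 2 * p ^ 2 + (1 - s ^ 2) * a ^ 2 * b ^ 2) / 4) * hs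
      + ((3 * b ^ 2 - q ^ 2) / 4) * hp + ((4 * a ^ 2 - 16) / 4) * hq
  nlinarith [mul_nonneg h1 (mul_nonneg h2 h3)]

set_option maxHeartbeats 2000000 in
theorem angle_ge_alpha_sum (u v : EuclideanSpace ℝ (Fin 2))
    (hu0 : u ≠ 0) (hv0 : v ≠ 0)
    (hu1 : 2 ≤ ‖u‖) (hu2 : ‖u‖ ≤ 2.52)
    (hv1 : 2 ≤ ‖v‖) (hv2 : ‖v‖ ≤ 2.52)
    (huv : 2 ≤ ‖u - v‖) :
    InnerProductGeometry.angle u v ≥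
      (Real.arccos (‖u‖ / 4) - Real.pi / 6) + (Real.arccos (‖v‖ / 4) - Real.pi / 6) := by
  set a : ℝ := ‖u‖ with ha_def
  set b : ℝ := ‖v‖ with hb_def
  set A : ℝ := Real.arccos (a / 4) with hA_def
  set B : ℝ := Real.arccos (b / 4) with hB_def
  set R : ℝ := A + B - Real.pi / 3 with hR_def
  -- sqrt quantities
  set P : ℝ := Real.sqrt (1 - (a / 4) ^ 2) with hP_def
  set Q : ℝ := Real.sqrt (1 - (b / 4) ^ 2) with hQ_def
  set S : ℝ := Real.sqrt 3 with hS_def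
  have hP2 : P ^ 2 = 1 - (a / 4) ^ 2 := Real.sq_sqrt (by nlinarith)
  have hQ2 : Q ^ 2 = 1 - (b / 4) ^ 2 := Real.sq_sqrt (by nlinarith)
  have hS2 : S ^ 2 = 3 := Real.sq_sqrt (by norm_num)
  have hP0 : 0 ≤ P := Real.sqrt_nonneg _
  have hQ0 : 0 ≤ Q := Real.sqrt_nonneg _
  have hS0 : 0 ≤ S := Real.sqrt_nonneg _
  -- inner product bound
  have hinner : (inner ℝ u v : ℝ) ≤ (a ^ 2 + b ^ 2 - 4) / 2 := by
    have h := norm_sub_sq_real u v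
    have h4 : (2 : ℝ) ^ 2 ≤ ‖u - v‖ ^ 2 := by
      have := norm_nonneg (u - v); nlinarith
    nlinarith
  -- cos R computation
  have hcosA : Real.cos A = a / 4 := Real.cos_arccos (by nlinarith) (by nlinarith)
  have hcosB : Real.cos B = b / 4 := Real.cos_arccos (by nlinarith) (by nlinarith)
  have hsinA : Real.sin A = P := Real.sin_arccos _
  have hsinB : Real.sin B = Q := Real.sin_arccos _
  have hcosR : Real.cos R = (a / 4 * (b / 4) - P * Q) * (1 / 2)
      + (P * (b / 4) + a / 4 * Q) * (S / 2) := by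
    rw [hR_def, Real.cos_sub, Real.cos_add, Real.sin_add, Real.cos_pi_div_three,
      Real.sin_pi_div_three, hcosA, hcosB, hsinA, hsinB]
  -- key inequality applied
  have hab : (0 : ℝ) < a * b := by nlinarith
  have hkey := key_ineq a b (4 * P) (4 * Q) S hu1 hu2 hv1 hv2
    (by positivity) (by positivity) hS0
    (by nlinarith) (by nlinarith) hS2
  have hcos_main : (inner ℝ u v : ℝ) / (a * b) ≤ Real.cos R := by
    rw [div_le_iff₀ hab, hcosR]
    nlinarith
  -- bounds on R
  have hS17 : (1.7 : ℝ) ≤ S := by nlinarith [hS2, hS0, sq_nonneg (S - 1.7)]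
  have hA6 : Real.pi / 6 ≤ A := by
    have h1 : a / 4 ≤ Real.cos (Real.pi / 6) := by
      rw [Real.cos_pi_div_six]; rw [hS_def] at hS17; nlinarith
    calc Real.pi / 6 = Real.arccos (Real.cos (Real.pi / 6)) :=
          (Real.arccos_cos (by positivity) (by nlinarith [Real.pi_pos])).symm
      _ ≤ A := by
          rw [hA_def]
          exact my_arccos_le_arccos h1
  have hB6 : Real.pi / 6 ≤ B := by
    have h1 : b / 4 ≤ Real.cos (Real.pi / 6) := by
      rw [Real.cos_pi_div_six]; rw [hS_def] at hS17; nlinarith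
    calc Real.pi / 6 = Real.arccos (Real.cos (Real.pi / 6)) :=
          (Real.arccos_cos (by positivity) (by nlinarith [Real.pi_pos])).symm
      _ ≤ B := by
          rw [hB_def]
          exact my_arccos_le_arccos h1
  have hR0 : 0 ≤ R := by rw [hR_def]; linarith
  have hRpi : R ≤ Real.pi := by
    have hA2 : A ≤ Real.pi / 2 := Real.arccos_le_pi_div_two.2 (by nlinarith)
    have hB2 : B ≤ Real.pi / 2 := Real.arccos_le_pi_div_two.2 (by nlinarith)
    rw [hR_def]; nlinarith [Real.pi_pos]
  -- conclude
  have hcos_angle : Real.cos (InnerProductGeometry.angle u v) ≤ Real.cos R := by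
    rw [InnerProductGeometry.cos_angle]
    exact hcos_main
  have hfinal : R ≤ InnerProductGeometry.angle u v := by
    by_contra h
    push_neg at h
    have := Real.strictAntiOn_cos
      ⟨InnerProductGeometry.angle_nonneg u v, InnerProductGeometry.angle_le_pi u v⟩
      ⟨hR0, hRpi⟩ h
    linarith
  calc A - Real.pi / 6 + (B - Real.pi / 6) = R := by rw [hR_def]; ring
    _ ≤ InnerProductGeometry.angle u v := hfinal
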